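/- For all n ≥ k ≥ 1, the 5-tuples of statistics (bDES, open, clos, rsb, lsb) and (bASC, open, clos, rsb, lsb) are equidistributed over the set OP_n^k of ordered set partitions of {1, …, n} into k blocks, where bDES and bASC denote the sets of block descents and block rises respectively. -/

import Mathlib

namespace OSP

/-- `π` is an ordered set partition of `{1, …, n}` into `k` blocks. -/
def isOP (n k : ℕ) (π : List (Finset ℕ)) : Prop :=
  π.length = k ∧ (∀ B ∈ π, B.Nonempty) ∧ π.Pairwise Disjoint
    ∧ ∀ x, (∃ B ∈ π, x ∈ B) ↔ x ∈ Finset.Icc 1 n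

/-- Block descent set: positions `i`, `1 ≤ i ≤ k-1`, such that every element
of `B_{i+1}` is smaller than every element of `B_i`. -/
def bDesSet (π : List (Finset ℕ)) : Set ℕ :=
  {i | ∃ h : i < π.length, 0 < i ∧
    ∀ y ∈ π[i]'h, ∀ x ∈ π[i - 1]'(by omega), y < x}

/-- Block rise set: positions `i`, `1 ≤ i ≤ k-1`, such that every element of
`B_i` is smaller than every element of `B_{i+1}`. -/
def bAscSet (π : List (Finset ℕ)) : Set ℕ :=
  {i | ∃ h : i < π.length, 0 < i ∧
    ∀ x ∈ π[i - 1]'(by omega), ∀ y ∈ π[i]'h, x < y}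

/-- The set of openers (minima of the blocks) of `π`. -/
def openers (π : List (Finset ℕ)) : Set ℕ :=
  {x | ∃ B ∈ π, x ∈ B ∧ ∀ y ∈ B, x ≤ y}

/-- The set of closers (maxima of the blocks) of `π`. -/
def closers (π : List (Finset ℕ)) : Set ℕ :=
  {x | ∃ B ∈ π, x ∈ B ∧ ∀ y ∈ B, y ≤ x}

open Classical in
/-- `rsb π = Σᵢ rsbᵢ π` where `rsbᵢ π` is the number of blocks strictly to the
right of the block containing `i` whose opener is `< i` and closer is `> i`. -/
noncomputable def rsb (n : ℕ) (π : List (Finset ℕ)) : ℕ :=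
  ∑ i ∈ Finset.Icc 1 n, ((Finset.range π.length).filter fun j =>
    ∃ hj : j < π.length, (∃ t, ∃ ht : t < π.length, t < j ∧ i ∈ π[t]'ht)
      ∧ (∃ b ∈ π[j]'hj, b < i) ∧ (∃ b ∈ π[j]'hj, i < b)).card

open Classical in
/-- `lsb π = Σᵢ lsbᵢ π` where `lsbᵢ π` is the number of blocks strictly to the
left of the block containing `i` whose opener is `< i` and closer is `> i`. -/
noncomputable def lsb (n : ℕ) (π : List (Finset ℕ)) : ℕ :=
  ∑ i ∈ Finset.Icc 1 n, ((Finset.range π.length).filter fun j =>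
    ∃ hj : j < π.length, (∃ t, ∃ ht : t < π.length, j < t ∧ i ∈ π[t]'ht)
      ∧ (∃ b ∈ π[j]'hj, b < i) ∧ (∃ b ∈ π[j]'hj, i < b)).card

/-- `MAK π = rsb π + Σ_{c ∈ clos(π)} (n − c)`. -/
noncomputable def MAK (n : ℕ) (π : List (Finset ℕ)) : ℕ :=
  rsb n π + (π.map fun B => n - B.sup id).sum

/-- `MAK' π = rsb π + Σ_{o ∈ open(π)} (o − 1)`. -/
noncomputable def MAK' (n : ℕ) (π : List (Finset ℕ)) : ℕ :=
  rsb n π + (π.map fun B => sInf (B : Set ℕ) - 1).sum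

end OSP


namespace OSPAux

variable (T : Finset ℕ)

def lseg (j : ℕ) : ℕ := Nat.findGreatest (fun m => m ∉ T) j

lemma rseg_ex (j : ℕ) : ∃ m, j ≤ m ∧ m + 1 ∉ T := by
  refine ⟨j + T.sup id, Nat.le_add_right _ _, fun h => ?_⟩
  have := Finset.le_sup (f := id) h
  simp only [id] at this; omega

def rseg (j : ℕ) : ℕ := Nat.find (rseg_ex T j)

variable {T}

lemma lseg_le (j : ℕ) : lseg T j ≤ j := Nat.findGreatest_le j

lemma lseg_not_mem (h0 : 0 ∉ T) (j : ℕ) : lseg T j ∉ T :=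
  Nat.findGreatest_spec (P := fun m => m ∉ T) (Nat.zero_le j) h0

lemma mem_of_lseg_lt {j m : ℕ} (h1 : lseg T j < m) (h2 : m ≤ j) : m ∈ T := by
  by_contra h
  exact Nat.findGreatest_is_greatest (P := fun m => m ∉ T) h1 h2 h

lemma le_rseg (j : ℕ) : j ≤ rseg T j := (Nat.find_spec (rseg_ex T j)).1

lemma rseg_succ_not_mem (j : ℕ) : rseg T j + 1 ∉ T := (Nat.find_spec (rseg_ex T j)).2

lemma mem_of_lt_rseg {j m : ℕ} (h1 : j ≤ m) (h2 : m < rseg T j) : m + 1 ∈ T := by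
  by_contra h
  exact Nat.find_min (rseg_ex T j) h2 ⟨h1, h⟩

/-- every internal adjacency of the segment is in `T` -/
lemma mem_of_seg {j m : ℕ} (h1 : lseg T j < m) (h2 : m ≤ rseg T j) : m ∈ T := by
  rcases le_or_gt m j with h | h
  · exact mem_of_lseg_lt h1 h
  · have := mem_of_lt_rseg (T := T) (j := j) (m := m - 1) (by omega) (by omega)
    have hm : m - 1 + 1 = m := by omega
    rwa [hm] at this

lemma lseg_const (h0 : 0 ∉ T) {j m : ℕ} (h1 : lseg T j ≤ m) (h2 : m ≤ rseg T j) :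
    lseg T m = lseg T j := by
  refine le_antisymm ?_ (Nat.le_findGreatest h1 (lseg_not_mem h0 j))
  by_contra h
  push_neg at h
  exact lseg_not_mem h0 m (mem_of_seg h (le_trans (lseg_le m) h2))

lemma rseg_const (h0 : 0 ∉ T) {j m : ℕ} (h1 : lseg T j ≤ m) (h2 : m ≤ rseg T j) :
    rseg T m = rseg T j := by
  refine le_antisymm (Nat.find_le ⟨h2, rseg_succ_not_mem j⟩) ?_
  by_contra h
  push_neg at h
  have hm := le_rseg (T := T) m
  have h3 : rseg T m + 1 ∈ T := mem_of_seg (j := j) (by omega) (by omega)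
  exact rseg_succ_not_mem (T := T) m h3

def sigma (T : Finset ℕ) (j : ℕ) : ℕ := lseg T j + rseg T j - j

lemma sigma_mem_seg (j : ℕ) : lseg T j ≤ sigma T j ∧ sigma T j ≤ rseg T j := by
  have h1 := lseg_le (T := T) j; have h2 := le_rseg (T := T) j
  unfold sigma; omega

lemma lseg_sigma (h0 : 0 ∉ T) (j : ℕ) : lseg T (sigma T j) = lseg T j :=
  lseg_const h0 (sigma_mem_seg j).1 (sigma_mem_seg j).2

lemma rseg_sigma (h0 : 0 ∉ T) (j : ℕ) : rseg T (sigma T j) = rseg T j :=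
  rseg_const h0 (sigma_mem_seg j).1 (sigma_mem_seg j).2

lemma sigma_sigma (h0 : 0 ∉ T) (j : ℕ) : sigma T (sigma T j) = j := by
  have h1 := lseg_le (T := T) j; have h2 := le_rseg (T := T) j
  have e1 := lseg_sigma h0 j
  have e2 := rseg_sigma h0 j
  unfold sigma at *
  omega

lemma sigma_lt (k : ℕ) (hk : k ∉ T) {j : ℕ} (hj : j < k) : sigma T j < k := by
  have h1 := lseg_le (T := T) j
  have h2 : rseg T j ≤ k - 1 := by
    refine Nat.find_le ⟨by omega, ?_⟩
    have hk1 : k - 1 + 1 = k := by omega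
    rwa [hk1]
  unfold sigma; omega

lemma rseg_lt_lseg (h0 : 0 ∉ T) {j j' : ℕ} (hjj : j < j') (hne : lseg T j ≠ lseg T j') :
    rseg T j < lseg T j' := by
  have hmono : lseg T j ≤ lseg T j' :=
    Nat.findGreatest_mono (fun _ h => h) (le_of_lt hjj)
  by_contra h
  push_neg at h
  exact lseg_not_mem h0 j' (mem_of_seg (by omega) h)

lemma sigma_lt_sigma (h0 : 0 ∉ T) {j j' : ℕ} (hjj : j < j') (hne : lseg T j ≠ lseg T j') :
    sigma T j < sigma T j' := by
  have h1 := (sigma_mem_seg (T := T) j).2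
  have h2 := (sigma_mem_seg (T := T) j').1
  have := rseg_lt_lseg h0 hjj hne
  omega

/-- if same segment then all adjacencies between are in T -/
lemma seg_eq_cases (h0 : 0 ∉ T) {j j' : ℕ} (h : lseg T j = lseg T j') (hjj : j ≤ j') :
    ∀ m, j < m → m ≤ j' → m ∈ T := by
  intro m hm1 hm2
  have hl := lseg_le (T := T) j
  have h' : lseg T j' < m := by omega
  exact mem_of_lseg_lt h' hm2
  
def perm (T : Finset ℕ) (π : List (Finset ℕ)) : List (Finset ℕ) :=
  (List.range π.length).map (fun j => π.getD (sigma T j) ∅)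

lemma length_perm (T : Finset ℕ) (π : List (Finset ℕ)) : (perm T π).length = π.length := by
  simp [perm]

lemma getElem_perm (T : Finset ℕ) (π : List (Finset ℕ)) {j : ℕ} (hj : j < π.length)
    (hs : sigma T j < π.length) :
    (perm T π)[j]'(by rwa [length_perm]) = π[sigma T j]'hs := by
  simp [perm, List.getD, List.getElem?_eq_getElem hs]

lemma perm_perm {T : Finset ℕ} (h0 : 0 ∉ T) {π : List (Finset ℕ)} (hk : π.length ∉ T) :
    perm T (perm T π) = π := by
  apply List.ext_getElem (by simp [length_perm])
  intro j h1 h2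
  have hj : j < π.length := by rwa [length_perm, length_perm] at h1
  have hs : sigma T j < π.length := sigma_lt _ hk hj
  have hss : sigma T (sigma T j) < π.length := sigma_lt _ hk hs
  rw [getElem_perm T (perm T π) (by rwa [length_perm]) (by rwa [length_perm])]
  rw [getElem_perm T π hs hss]
  congr 1
  exact sigma_sigma h0 j

lemma mem_perm {T : Finset ℕ} (h0 : 0 ∉ T) {π : List (Finset ℕ)} (hk : π.length ∉ T)
    {B : Finset ℕ} : B ∈ perm T π ↔ B ∈ π := by
  constructor
  · intro hB
    obtain ⟨j, hj, hBj⟩ := List.mem_iff_getElem.1 hB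
    have hj' : j < π.length := by rwa [length_perm] at hj
    have hs : sigma T j < π.length := sigma_lt _ hk hj'
    rw [getElem_perm T π hj' hs] at hBj
    exact hBj ▸ List.getElem_mem hs
  · intro hB
    obtain ⟨j, hj, hBj⟩ := List.mem_iff_getElem.1 hB
    have hs : sigma T j < π.length := sigma_lt _ hk hj
    refine List.mem_iff_getElem.2 ⟨sigma T j, by rwa [length_perm], ?_⟩
    rw [getElem_perm T π hs (by rwa [sigma_sigma h0])]
    have e : sigma T (sigma T j) = j := sigma_sigma h0 j
    simp only [e]
    exact hBj

lemma chain_desc (π : List (Finset ℕ)) (hne : ∀ B ∈ π, B.Nonempty) :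
    ∀ q (hq : q < π.length) p (hp : p < q),
    (∀ m, p < m → m ≤ q → m ∈ OSP.bDesSet π) →
    ∀ y ∈ π[q]'hq, ∀ x ∈ π[p]'(by omega), y < x := by
  intro q
  induction q with
  | zero => omega
  | succ q ih =>
    intro hq p hp h y hy x hx
    obtain ⟨h', _, hd⟩ := h (q+1) (by omega) le_rfl
    have hd' : ∀ y ∈ π[q+1]'hq, ∀ x ∈ π[q]'(by omega), y < x := by
      simpa using hd
    rcases Nat.lt_or_ge p q with hpq | hpq
    · obtain ⟨z, hz⟩ := hne (π[q]'(by omega)) (List.getElem_mem _)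
      exact lt_trans (hd' y hy z hz)
        (ih (by omega) p hpq (fun m h1 h2 => h m h1 (by omega)) z hz x hx)
    · have : p = q := by omega
      subst this
      exact hd' y hy x hx

lemma chain_asc (π : List (Finset ℕ)) (hne : ∀ B ∈ π, B.Nonempty) :
    ∀ q (hq : q < π.length) p (hp : p < q),
    (∀ m, p < m → m ≤ q → m ∈ OSP.bAscSet π) →
    ∀ x ∈ π[p]'(by omega), ∀ y ∈ π[q]'hq, x < y := by
  intro q
  induction q with
  | zero => omega
  | succ q ih =>
    intro hq p hp h x hx y hy
    obtain ⟨h', _, hd⟩ := h (q+1) (by omega) le_rfl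
    have hd' : ∀ x ∈ π[q]'(by omega), ∀ y ∈ π[q+1]'hq, x < y := by
      simpa using hd
    rcases Nat.lt_or_ge p q with hpq | hpq
    · obtain ⟨z, hz⟩ := hne (π[q]'(by omega)) (List.getElem_mem _)
      exact lt_trans
        (ih (by omega) p hpq (fun m h1 h2 => h m h1 (by omega)) x hx z hz)
        (hd' z hz y hy)
    · have : p = q := by omega
      subst this
      exact hd' x hx y hy

/-- comparability of two distinct blocks in the same `T`-segment -/
def Comp (T : Finset ℕ) (π : List (Finset ℕ)) : Prop :=
  ∀ p q (hp : p < π.length) (hq : q < π.length), p ≠ q → lseg T p = lseg T q →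
    (∀ x ∈ π[p]'hp, ∀ y ∈ π[q]'hq, x < y) ∨ (∀ y ∈ π[q]'hq, ∀ x ∈ π[p]'hp, y < x)

lemma comp_of_des {π : List (Finset ℕ)} (h0 : 0 ∉ T) (hne : ∀ B ∈ π, B.Nonempty)
    (hdes : ∀ i ∈ T, i ∈ OSP.bDesSet π) : Comp T π := by
  intro p q hp hq hpq hseg
  rcases Nat.lt_or_ge p q with h | h
  · right
    exact chain_desc π hne q hq p h
      (fun m h1 h2 => hdes m (seg_eq_cases h0 hseg (by omega) m h1 h2))
  · left
    have h' : q < p := by omega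
    exact chain_desc π hne p hp q h'
      (fun m h1 h2 => hdes m (seg_eq_cases h0 hseg.symm (by omega) m h1 h2))

lemma comp_of_asc {π : List (Finset ℕ)} (h0 : 0 ∉ T) (hne : ∀ B ∈ π, B.Nonempty)
    (hasc : ∀ i ∈ T, i ∈ OSP.bAscSet π) : Comp T π := by
  intro p q hp hq hpq hseg
  rcases Nat.lt_or_ge p q with h | h
  · left
    exact chain_asc π hne q hq p h
      (fun m h1 h2 => hasc m (seg_eq_cases h0 hseg (by omega) m h1 h2))
  · right
    have h' : q < p := by omega
    exact chain_asc π hne p hp q h'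
      (fun m h1 h2 => hasc m (seg_eq_cases h0 hseg.symm (by omega) m h1 h2))

/-- if `i ∈ π[u]` and `π[v]` straddles `i` then `u`, `v` lie in different segments -/
lemma seg_ne_of_straddle {π : List (Finset ℕ)} (hcomp : Comp T π) {i u v : ℕ}
    (hu : u < π.length) (hv : v < π.length) (huv : u ≠ v)
    (hi : i ∈ π[u]'hu) (hb1 : ∃ b ∈ π[v]'hv, b < i) (hb2 : ∃ b ∈ π[v]'hv, i < b) :
    lseg T u ≠ lseg T v := by
  intro hseg
  obtain ⟨b1, hb1m, hb1lt⟩ := hb1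
  obtain ⟨b2, hb2m, hb2lt⟩ := hb2
  rcases hcomp u v hu hv huv hseg with h | h
  · exact absurd (h i hi b1 hb1m) (by omega)
  · exact absurd (h b2 hb2m i hi) (by omega)

lemma lt_iff_sigma_lt {T : Finset ℕ} (h0 : 0 ∉ T) {t j : ℕ}
    (hne : lseg T t ≠ lseg T j) : t < j ↔ sigma T t < sigma T j := by
  constructor
  · exact fun h => sigma_lt_sigma h0 h hne
  · intro h
    by_contra hc
    rcases Nat.lt_or_ge j t with h' | h'
    · exact absurd (sigma_lt_sigma h0 h' hne.symm) (by omega)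
    · have : t = j := by omega
      exact hne (this ▸ rfl)

lemma rsb_perm (n : ℕ) {T : Finset ℕ} {π : List (Finset ℕ)} (h0 : 0 ∉ T)
    (hk : π.length ∉ T) (hcomp : Comp T π) : OSP.rsb n (perm T π) = OSP.rsb n π := by
  unfold OSP.rsb
  simp only [length_perm]
  refine Finset.sum_congr rfl (fun i _ => ?_)
  refine Finset.card_nbij' (sigma T) (sigma T) ?_ ?_
    (fun j _ => sigma_sigma h0 j) (fun j _ => sigma_sigma h0 j)
  · intro j hjm
    simp only [Finset.mem_coe, Finset.mem_filter, Finset.mem_range] at hjm ⊢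
    obtain ⟨hjr, hj, ⟨t, ht, htj, hit⟩, hb1, hb2⟩ := hjm
    have hj' : j < π.length := by exact hj
    have ht' : t < π.length := by exact ht
    have hsj : sigma T j < π.length := sigma_lt _ hk hj'
    have hst : sigma T t < π.length := sigma_lt _ hk ht'
    rw [getElem_perm T π ht' hst] at hit
    rw [getElem_perm T π hj' hsj] at hb1 hb2
    have htj' : sigma T t ≠ sigma T j := by
      intro h
      have := congrArg (sigma T) h
      rw [sigma_sigma h0, sigma_sigma h0] at this
      omega
    have hne := seg_ne_of_straddle hcomp hst hsj htj' hit hb1 hb2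
    have hne' : lseg T t ≠ lseg T j := by
      rwa [lseg_sigma h0, lseg_sigma h0] at hne
    have key : sigma T t < sigma T j := (lt_iff_sigma_lt h0 hne').1 htj
    exact ⟨hsj, hsj, ⟨sigma T t, hst, key, hit⟩, hb1, hb2⟩
  · intro j hjm
    simp only [Finset.mem_coe, Finset.mem_filter, Finset.mem_range] at hjm ⊢
    obtain ⟨hjr, hj, ⟨t, ht, htj, hit⟩, hb1, hb2⟩ := hjm
    have hsj : sigma T j < π.length := sigma_lt _ hk hj
    have hst : sigma T t < π.length := sigma_lt _ hk ht
    have hne := seg_ne_of_straddle hcomp ht hj (by omega) hit hb1 hb2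
    have key : sigma T t < sigma T j := (lt_iff_sigma_lt h0 hne).1 htj
    refine ⟨hsj, by exact hsj, ⟨sigma T t, by exact hst, key, ?_⟩, ?_, ?_⟩
    · rw [getElem_perm T π hst (by rwa [sigma_sigma h0])]
      have e : sigma T (sigma T t) = t := sigma_sigma h0 t
      simp only [e]
      exact hit
    · rw [getElem_perm T π hsj (by rwa [sigma_sigma h0])]
      have e : sigma T (sigma T j) = j := sigma_sigma h0 j
      simp only [e]
      exact hb1
    · rw [getElem_perm T π hsj (by rwa [sigma_sigma h0])]
      have e : sigma T (sigma T j) = j := sigma_sigma h0 j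
      simp only [e]
      exact hb2

lemma lsb_perm (n : ℕ) {T : Finset ℕ} {π : List (Finset ℕ)} (h0 : 0 ∉ T)
    (hk : π.length ∉ T) (hcomp : Comp T π) : OSP.lsb n (perm T π) = OSP.lsb n π := by
  unfold OSP.lsb
  simp only [length_perm]
  refine Finset.sum_congr rfl (fun i _ => ?_)
  refine Finset.card_nbij' (sigma T) (sigma T) ?_ ?_
    (fun j _ => sigma_sigma h0 j) (fun j _ => sigma_sigma h0 j)
  · intro j hjm
    simp only [Finset.mem_coe, Finset.mem_filter, Finset.mem_range] at hjm ⊢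
    obtain ⟨hjr, hj, ⟨t, ht, htj, hit⟩, hb1, hb2⟩ := hjm
    have hj' : j < π.length := by exact hj
    have ht' : t < π.length := by exact ht
    have hsj : sigma T j < π.length := sigma_lt _ hk hj'
    have hst : sigma T t < π.length := sigma_lt _ hk ht'
    rw [getElem_perm T π ht' hst] at hit
    rw [getElem_perm T π hj' hsj] at hb1 hb2
    have htj' : sigma T t ≠ sigma T j := by
      intro h
      have := congrArg (sigma T) h
      rw [sigma_sigma h0, sigma_sigma h0] at this
      omega
    have hne := seg_ne_of_straddle hcomp hst hsj htj' hit hb1 hb2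
    have hne' : lseg T j ≠ lseg T t := by
      rw [← lseg_sigma (T := T) h0 t, ← lseg_sigma (T := T) h0 j]
      exact hne.symm
    have key : sigma T j < sigma T t := (lt_iff_sigma_lt h0 hne').1 htj
    exact ⟨hsj, hsj, ⟨sigma T t, hst, key, hit⟩, hb1, hb2⟩
  · intro j hjm
    simp only [Finset.mem_coe, Finset.mem_filter, Finset.mem_range] at hjm ⊢
    obtain ⟨hjr, hj, ⟨t, ht, htj, hit⟩, hb1, hb2⟩ := hjm
    have hsj : sigma T j < π.length := sigma_lt _ hk hj
    have hst : sigma T t < π.length := sigma_lt _ hk ht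
    have hne := seg_ne_of_straddle hcomp ht hj (by omega) hit hb1 hb2
    have key : sigma T j < sigma T t := (lt_iff_sigma_lt h0 hne.symm).1 htj
    refine ⟨hsj, by exact hsj, ⟨sigma T t, by exact hst, key, ?_⟩, ?_, ?_⟩
    · rw [getElem_perm T π hst (by rwa [sigma_sigma h0])]
      have e : sigma T (sigma T t) = t := sigma_sigma h0 t
      simp only [e]
      exact hit
    · rw [getElem_perm T π hsj (by rwa [sigma_sigma h0])]
      have e : sigma T (sigma T j) = j := sigma_sigma h0 j
      simp only [e]
      exact hb1
    · rw [getElem_perm T π hsj (by rwa [sigma_sigma h0])]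
      have e : sigma T (sigma T j) = j := sigma_sigma h0 j
      simp only [e]
      exact hb2


lemma asc_perm {T : Finset ℕ} {π : List (Finset ℕ)} (h0 : 0 ∉ T) (hk : π.length ∉ T)
    (hdes : ∀ i ∈ T, i ∈ OSP.bDesSet π) : ∀ i ∈ T, i ∈ OSP.bAscSet (perm T π) := by
  intro i hiT
  obtain ⟨hlen, hpos, _⟩ := hdes i hiT
  have hl := lseg_le (T := T) i
  have hr := le_rseg (T := T) i
  have hlne : lseg T i ≠ i := fun h => (lseg_not_mem h0 i) (by rw [h]; exact hiT)
  have hl1 : lseg T i ≤ i - 1 := by omega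
  have hr1 : i - 1 ≤ rseg T i := by omega
  have e1 : lseg T (i-1) = lseg T i := lseg_const h0 hl1 hr1
  have e2 : rseg T (i-1) = rseg T i := rseg_const h0 hl1 hr1
  have hsig : sigma T i = lseg T i + rseg T i - i := rfl
  have es : sigma T (i-1) = sigma T i + 1 := by
    unfold sigma; rw [e1, e2]; omega
  have hm : sigma T i + 1 ∈ T := by
    refine mem_of_seg (j := i) ?_ ?_
    · have := (sigma_mem_seg (T := T) i).1; omega
    · omega
  obtain ⟨hmlen, hmpos, hdm⟩ := hdes _ hm
  have hsi : sigma T i < π.length := sigma_lt _ hk hlen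
  have hsi1 : sigma T (i-1) < π.length := sigma_lt _ hk (by omega)
  refine ⟨by rw [length_perm]; exact hlen, hpos, ?_⟩
  rw [getElem_perm T π (by omega : i - 1 < π.length) hsi1,
      getElem_perm T π hlen hsi]
  simp only [es]
  simp only [Nat.add_sub_cancel] at hdm
  exact hdm

lemma des_perm {T : Finset ℕ} {π : List (Finset ℕ)} (h0 : 0 ∉ T) (hk : π.length ∉ T)
    (hasc : ∀ i ∈ T, i ∈ OSP.bAscSet π) : ∀ i ∈ T, i ∈ OSP.bDesSet (perm T π) := by
  intro i hiT
  obtain ⟨hlen, hpos, _⟩ := hasc i hiT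
  have hl := lseg_le (T := T) i
  have hr := le_rseg (T := T) i
  have hlne : lseg T i ≠ i := fun h => (lseg_not_mem h0 i) (by rw [h]; exact hiT)
  have hl1 : lseg T i ≤ i - 1 := by omega
  have hr1 : i - 1 ≤ rseg T i := by omega
  have e1 : lseg T (i-1) = lseg T i := lseg_const h0 hl1 hr1
  have e2 : rseg T (i-1) = rseg T i := rseg_const h0 hl1 hr1
  have hsig : sigma T i = lseg T i + rseg T i - i := rfl
  have es : sigma T (i-1) = sigma T i + 1 := by
    unfold sigma; rw [e1, e2]; omega
  have hm : sigma T i + 1 ∈ T := by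
    refine mem_of_seg (j := i) ?_ ?_
    · have := (sigma_mem_seg (T := T) i).1; omega
    · omega
  obtain ⟨hmlen, hmpos, hdm⟩ := hasc _ hm
  have hsi : sigma T i < π.length := sigma_lt _ hk hlen
  have hsi1 : sigma T (i-1) < π.length := sigma_lt _ hk (by omega)
  refine ⟨by rw [length_perm]; exact hlen, hpos, ?_⟩
  rw [getElem_perm T π (by omega : i - 1 < π.length) hsi1,
      getElem_perm T π hlen hsi]
  simp only [es]
  simp only [Nat.add_sub_cancel] at hdm
  exact hdm

lemma openers_perm {T : Finset ℕ} {π : List (Finset ℕ)} (h0 : 0 ∉ T)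
    (hk : π.length ∉ T) : OSP.openers (perm T π) = OSP.openers π := by
  ext x
  unfold OSP.openers
  simp only [Set.mem_setOf_eq]
  constructor <;> rintro ⟨B, hB, h⟩
  · exact ⟨B, (mem_perm h0 hk).1 hB, h⟩
  · exact ⟨B, (mem_perm h0 hk).2 hB, h⟩

lemma closers_perm {T : Finset ℕ} {π : List (Finset ℕ)} (h0 : 0 ∉ T)
    (hk : π.length ∉ T) : OSP.closers (perm T π) = OSP.closers π := by
  ext x
  unfold OSP.closers
  simp only [Set.mem_setOf_eq]
  constructor <;> rintro ⟨B, hB, h⟩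
  · exact ⟨B, (mem_perm h0 hk).1 hB, h⟩
  · exact ⟨B, (mem_perm h0 hk).2 hB, h⟩

lemma isOP_perm {n k : ℕ} {T : Finset ℕ} {π : List (Finset ℕ)} (h0 : 0 ∉ T)
    (hkT : k ∉ T) (h : OSP.isOP n k π) : OSP.isOP n k (perm T π) := by
  obtain ⟨hlen, hne, hdisj, hcov⟩ := h
  have hk' : π.length ∉ T := by rwa [hlen]
  refine ⟨by rw [length_perm, hlen], fun B hB => hne B ((mem_perm h0 hk').1 hB), ?_, fun x => ?_⟩
  · rw [List.pairwise_iff_getElem] at hdisj ⊢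
    intro a c ha hc hac
    have ha' : a < π.length := by rwa [length_perm] at ha
    have hc' : c < π.length := by rwa [length_perm] at hc
    have hsa := sigma_lt _ hk' ha'
    have hsc := sigma_lt _ hk' hc'
    rw [getElem_perm T π ha' hsa, getElem_perm T π hc' hsc]
    have hne2 : sigma T a ≠ sigma T c := by
      intro h
      have := congrArg (sigma T) h
      rw [sigma_sigma h0, sigma_sigma h0] at this
      omega
    rcases Nat.lt_or_ge (sigma T a) (sigma T c) with h | h
    · exact hdisj _ _ hsa hsc h
    · exact (hdisj _ _ hsc hsa (by omega)).symm
  · rw [← hcov x]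
    constructor <;> rintro ⟨B, hB, hxB⟩
    · exact ⟨B, (mem_perm h0 hk').1 hB, hxB⟩
    · exact ⟨B, (mem_perm h0 hk').2 hB, hxB⟩

def Base (n k : ℕ) (O C : Set ℕ) (a b : ℕ) (π : List (Finset ℕ)) : Prop :=
  OSP.isOP n k π ∧ OSP.openers π = O ∧ OSP.closers π = C
    ∧ OSP.rsb n π = a ∧ OSP.lsb n π = b

lemma base_perm {n k : ℕ} {O C : Set ℕ} {a b : ℕ} {T : Finset ℕ} (h0 : 0 ∉ T)
    (hkT : k ∉ T) {π : List (Finset ℕ)} (hb : Base n k O C a b π)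
    (hcomp : Comp T π) : Base n k O C a b (perm T π) := by
  obtain ⟨hop, hO, hC, ha, hb'⟩ := hb
  have hk' : π.length ∉ T := by rw [hop.1]; exact hkT
  exact ⟨isOP_perm h0 hkT hop, (openers_perm h0 hk').trans hO,
    (closers_perm h0 hk').trans hC, (rsb_perm n h0 hk' hcomp).trans ha,
    (lsb_perm n h0 hk' hcomp).trans hb'⟩

lemma key_card (n k : ℕ) (O C : Set ℕ) (a b : ℕ) (T : Finset ℕ) (h0 : 0 ∉ T)
    (hkT : k ∉ T) :
    {π : List (Finset ℕ) | Base n k O C a b π ∧ ∀ i ∈ T, i ∈ OSP.bDesSet π}.ncard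
      = {π : List (Finset ℕ) | Base n k O C a b π ∧ ∀ i ∈ T, i ∈ OSP.bAscSet π}.ncard := by
  set A := {π : List (Finset ℕ) | Base n k O C a b π ∧ ∀ i ∈ T, i ∈ OSP.bDesSet π}
  set B := {π : List (Finset ℕ) | Base n k O C a b π ∧ ∀ i ∈ T, i ∈ OSP.bAscSet π}
  have hAk : ∀ π ∈ A, π.length ∉ T := fun π hπ => by
    rw [hπ.1.1.1]; exact hkT
  have hBk : ∀ π ∈ B, π.length ∉ T := fun π hπ => by
    rw [hπ.1.1.1]; exact hkT
  have himg : perm T '' A = B := by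
    apply Set.Subset.antisymm
    · rintro ρ ⟨π, hπ, rfl⟩
      exact ⟨base_perm h0 hkT hπ.1 (comp_of_des h0 hπ.1.1.2.1 hπ.2),
        asc_perm h0 (hAk π hπ) hπ.2⟩
    · intro ρ hρ
      refine ⟨perm T ρ, ⟨base_perm h0 hkT hρ.1 (comp_of_asc h0 hρ.1.1.2.1 hρ.2),
        des_perm h0 (hBk ρ hρ) hρ.2⟩, perm_perm h0 (hBk ρ hρ)⟩
  have hinj : Set.InjOn (perm T) A := by
    intro x hx y hy hxy
    have := congrArg (perm T) hxy
    rwa [perm_perm h0 (hAk x hx), perm_perm h0 (hAk y hy)] at this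
  rw [← himg, Set.ncard_image_of_injOn hinj]

lemma finite_lists (F : Finset (Finset ℕ)) :
    ∀ k, {l : List (Finset ℕ) | l.length = k ∧ ∀ B ∈ l, B ∈ F}.Finite := by
  intro k
  induction k with
  | zero =>
    refine Set.Finite.subset (Set.finite_singleton []) ?_
    intro l hl
    simp only [Set.mem_setOf_eq, List.length_eq_zero_iff] at hl
    simp [hl.1]
  | succ k ih =>
    refine Set.Finite.subset (((F.finite_toSet).prod ih).image
      (fun p : Finset ℕ × List (Finset ℕ) => p.1 :: p.2)) ?_
    intro l hl
    obtain ⟨hlen, hmem⟩ := hl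
    cases l with
    | nil => simp at hlen
    | cons B t =>
      refine ⟨(B, t), ⟨hmem B (by simp), ?_, fun B' hB' => hmem B' (by simp [hB'])⟩, rfl⟩
      simpa using hlen

lemma finite_base (n k : ℕ) (O C : Set ℕ) (a b : ℕ) :
    {π : List (Finset ℕ) | Base n k O C a b π}.Finite := by
  refine Set.Finite.subset (finite_lists ((Finset.Icc 1 n).powerset) k) ?_
  rintro π ⟨⟨hlen, hne, hdisj, hcov⟩, _⟩
  refine ⟨hlen, fun B hB => ?_⟩
  rw [Finset.mem_powerset]
  intro x hx
  exact (hcov x).1 ⟨B, hB, hx⟩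

lemma count_eq_of_superset_counts {α : Type*} (X : Finset α) (U : Finset ℕ)
    (f g : α → Finset ℕ) (hf : ∀ x ∈ X, f x ⊆ U) (hg : ∀ x ∈ X, g x ⊆ U)
    (H : ∀ T ⊆ U, (X.filter fun x => T ⊆ f x).card = (X.filter fun x => T ⊆ g x).card) :
    ∀ S, (X.filter fun x => f x = S).card = (X.filter fun x => g x = S).card := by
  classical
  have decomp : ∀ (f : α → Finset ℕ), (∀ x ∈ X, f x ⊆ U) → ∀ S : Finset ℕ,
      (X.filter fun x => S ⊆ f x).card
        = (X.filter fun x => f x = S).card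
          + ∑ S' ∈ U.powerset.filter (fun S' => S ⊂ S'),
              (X.filter fun x => f x = S').card := by
    intro f hf S
    have split : X.filter (fun x => S ⊆ f x)
        = (X.filter fun x => f x = S) ∪ (X.filter fun x => S ⊂ f x) := by
      ext x
      simp only [Finset.mem_filter, Finset.mem_union]
      constructor
      · rintro ⟨hx, hsub⟩
        rcases lt_or_eq_of_le hsub with h | h
        · exact Or.inr ⟨hx, h⟩
        · exact Or.inl ⟨hx, h.symm⟩
      · rintro (⟨hx, h⟩ | ⟨hx, h⟩)
        · exact ⟨hx, h ▸ le_rfl⟩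
        · exact ⟨hx, h.subset⟩
    have hdisj : Disjoint (X.filter fun x => f x = S) (X.filter fun x => S ⊂ f x) := by
      rw [Finset.disjoint_left]
      intro x hx hy
      simp only [Finset.mem_filter] at hx hy
      exact hy.2.ne hx.2.symm
    have hbi : X.filter (fun x => S ⊂ f x)
        = (U.powerset.filter (fun S' => S ⊂ S')).biUnion
            (fun S' => X.filter fun x => f x = S') := by
      ext x
      simp only [Finset.mem_filter, Finset.mem_biUnion, Finset.mem_powerset]
      constructor
      · rintro ⟨hx, hss⟩
        exact ⟨f x, ⟨hf x hx, hss⟩, hx, rfl⟩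
      · rintro ⟨S', ⟨_, hss⟩, hx, rfl⟩
        exact ⟨hx, hss⟩
    rw [split, Finset.card_union_of_disjoint hdisj, hbi, Finset.card_biUnion]
    intro x hx y hy hxy
    rw [Function.onFun, Finset.disjoint_left]
    intro z hzx hzy
    simp only [Finset.mem_filter] at hzx hzy
    exact hxy (hzx.2 ▸ hzy.2 ▸ rfl)
  have main : ∀ d (S : Finset ℕ), S ⊆ U → U.card - S.card < d →
      (X.filter fun x => f x = S).card = (X.filter fun x => g x = S).card := by
    intro d
    induction d with
    | zero => omega
    | succ d ih =>
      intro S hSU hd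
      have h1 := decomp f hf S
      have h2 := decomp g hg S
      have hsum : ∑ S' ∈ U.powerset.filter (fun S' => S ⊂ S'),
            (X.filter fun x => f x = S').card
          = ∑ S' ∈ U.powerset.filter (fun S' => S ⊂ S'),
            (X.filter fun x => g x = S').card := by
        refine Finset.sum_congr rfl (fun S' hS' => ?_)
        simp only [Finset.mem_filter, Finset.mem_powerset] at hS'
        refine ih S' hS'.1 ?_
        have := Finset.card_lt_card hS'.2
        have := Finset.card_le_card hS'.1
        omega
      have hH := H S hSU
      omega
  intro S
  by_cases hSU : S ⊆ U
  · refine main (U.card - S.card + 1) S hSU (by omega)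
  · rw [Finset.filter_false_of_mem, Finset.filter_false_of_mem]
    · intro x hx h
      exact hSU (h ▸ hg x hx)
    · intro x hx h
      exact hSU (h ▸ hf x hx)

end OSPAux

/-- The 5-tuples of statistics `(bDES, open, clos, rsb, lsb)` and
`(bASC, open, clos, rsb, lsb)` are equidistributed over the ordered set
partitions of `{1, …, n}` into `k` blocks. -/
theorem stmt_15 (n k : ℕ) (h1 : 1 ≤ k) (h2 : k ≤ n) (S O C : Set ℕ) (a b : ℕ) :
    {π : List (Finset ℕ) | OSP.isOP n k π ∧ OSP.bDesSet π = S
        ∧ OSP.openers π = O ∧ OSP.closers π = C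
        ∧ OSP.rsb n π = a ∧ OSP.lsb n π = b}.ncard
      = {π : List (Finset ℕ) | OSP.isOP n k π ∧ OSP.bAscSet π = S
        ∧ OSP.openers π = O ∧ OSP.closers π = C
        ∧ OSP.rsb n π = a ∧ OSP.lsb n π = b}.ncard := by
  classical
  have hbd : ∀ π, OSP.isOP n k π → OSP.bDesSet π ⊆ Set.Ico 1 k := by
    intro π hπ i hi
    obtain ⟨h, hp, _⟩ := hi
    exact ⟨hp, hπ.1 ▸ h⟩
  have hba : ∀ π, OSP.isOP n k π → OSP.bAscSet π ⊆ Set.Ico 1 k := by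
    intro π hπ i hi
    obtain ⟨h, hp, _⟩ := hi
    exact ⟨hp, hπ.1 ▸ h⟩
  by_cases hS : S ⊆ Set.Ico 1 k
  · set U : Finset ℕ := Finset.Ico 1 k with hU
    have hUco : (U : Set ℕ) = Set.Ico 1 k := by simp [hU]
    set S₀ : Finset ℕ := U.filter (fun i => i ∈ S) with hS₀
    have hS0 : (S₀ : Set ℕ) = S := by
      ext x
      simp only [hS₀, Finset.coe_filter, Set.mem_setOf_eq]
      constructor
      · rintro ⟨_, hx⟩; exact hx
      · intro hx
        refine ⟨?_, hx⟩
        have := hS hx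
        rw [← hUco] at this
        exact this
    have hfin := OSPAux.finite_base n k O C a b
    set X := hfin.toFinset with hX
    have hXmem : ∀ π, π ∈ X ↔ OSPAux.Base n k O C a b π := fun π => hfin.mem_toFinset
    set f : List (Finset ℕ) → Finset ℕ :=
      fun π => U.filter (fun i => i ∈ OSP.bDesSet π) with hfdef
    set g : List (Finset ℕ) → Finset ℕ :=
      fun π => U.filter (fun i => i ∈ OSP.bAscSet π) with hgdef
    have hfc : ∀ π ∈ X, (f π : Set ℕ) = OSP.bDesSet π := by
      intro π hπ
      ext i
      simp only [hfdef, Finset.coe_filter, Set.mem_setOf_eq]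
      constructor
      · rintro ⟨_, hi⟩; exact hi
      · intro hi
        refine ⟨?_, hi⟩
        have := hbd π ((hXmem π).1 hπ).1 hi
        rwa [← hUco] at this
    have hgc : ∀ π ∈ X, (g π : Set ℕ) = OSP.bAscSet π := by
      intro π hπ
      ext i
      simp only [hgdef, Finset.coe_filter, Set.mem_setOf_eq]
      constructor
      · rintro ⟨_, hi⟩; exact hi
      · intro hi
        refine ⟨?_, hi⟩
        have := hba π ((hXmem π).1 hπ).1 hi
        rwa [← hUco] at this
    have hfU : ∀ π ∈ X, f π ⊆ U := fun π _ => Finset.filter_subset _ _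
    have hgU : ∀ π ∈ X, g π ⊆ U := fun π _ => Finset.filter_subset _ _
    have H : ∀ T ⊆ U, (X.filter fun π => T ⊆ f π).card
        = (X.filter fun π => T ⊆ g π).card := by
      intro T hT
      have h0 : 0 ∉ T := fun h => by
        have := hT h; rw [hU, Finset.mem_Ico] at this; omega
      have hkT : k ∉ T := fun h => by
        have := hT h; rw [hU, Finset.mem_Ico] at this; omega
      have e1 : ((X.filter fun π => T ⊆ f π) : Set (List (Finset ℕ)))
          = {π | OSPAux.Base n k O C a b π ∧ ∀ i ∈ T, i ∈ OSP.bDesSet π} := by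
        ext π
        simp only [Finset.coe_filter, Set.mem_setOf_eq, hXmem]
        constructor
        · rintro ⟨hb, hsub⟩
          refine ⟨hb, fun i hi => ?_⟩
          have := hsub hi
          rw [← hfc π ((hXmem π).2 hb)]
          exact this
        · rintro ⟨hb, hsub⟩
          refine ⟨hb, fun i hi => ?_⟩
          have h' := hsub i hi
          have := hfc π ((hXmem π).2 hb)
          rw [← this] at h'
          exact h'
      have e2 : ((X.filter fun π => T ⊆ g π) : Set (List (Finset ℕ)))
          = {π | OSPAux.Base n k O C a b π ∧ ∀ i ∈ T, i ∈ OSP.bAscSet π} := by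
        ext π
        simp only [Finset.coe_filter, Set.mem_setOf_eq, hXmem]
        constructor
        · rintro ⟨hb, hsub⟩
          refine ⟨hb, fun i hi => ?_⟩
          have := hsub hi
          rw [← hgc π ((hXmem π).2 hb)]
          exact this
        · rintro ⟨hb, hsub⟩
          refine ⟨hb, fun i hi => ?_⟩
          have h' := hsub i hi
          have := hgc π ((hXmem π).2 hb)
          rw [← this] at h'
          exact h'
      have := OSPAux.key_card n k O C a b T h0 hkT
      rw [← e1, ← e2] at this
      rw [← Set.ncard_coe_finset, ← Set.ncard_coe_finset]
      exact this
    have final := OSPAux.count_eq_of_superset_counts X U f g hfU hgU H S₀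
    have eL : {π : List (Finset ℕ) | OSP.isOP n k π ∧ OSP.bDesSet π = S
        ∧ OSP.openers π = O ∧ OSP.closers π = C
        ∧ OSP.rsb n π = a ∧ OSP.lsb n π = b}
        = ((X.filter fun π => f π = S₀) : Finset (List (Finset ℕ))) := by
      ext π
      simp only [Set.mem_setOf_eq, Finset.coe_filter, hXmem]
      constructor
      · rintro ⟨ha1, ha2, ha3, ha4, ha5, ha6⟩
        have hb : OSPAux.Base n k O C a b π := ⟨ha1, ha3, ha4, ha5, ha6⟩
        refine ⟨hb, ?_⟩
        apply Finset.coe_injective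
        rw [hfc π ((hXmem π).2 hb), hS0, ha2]
      · rintro ⟨hb, hfeq⟩
        obtain ⟨ha1, ha3, ha4, ha5, ha6⟩ := hb
        refine ⟨ha1, ?_, ha3, ha4, ha5, ha6⟩
        rw [← hS0, ← hfeq]
        exact (hfc π ((hXmem π).2 ⟨ha1, ha3, ha4, ha5, ha6⟩)).symm
    have eR : {π : List (Finset ℕ) | OSP.isOP n k π ∧ OSP.bAscSet π = S
        ∧ OSP.openers π = O ∧ OSP.closers π = C
        ∧ OSP.rsb n π = a ∧ OSP.lsb n π = b}
        = ((X.filter fun π => g π = S₀) : Finset (List (Finset ℕ))) := by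
      ext π
      simp only [Set.mem_setOf_eq, Finset.coe_filter, hXmem]
      constructor
      · rintro ⟨ha1, ha2, ha3, ha4, ha5, ha6⟩
        have hb : OSPAux.Base n k O C a b π := ⟨ha1, ha3, ha4, ha5, ha6⟩
        refine ⟨hb, ?_⟩
        apply Finset.coe_injective
        rw [hgc π ((hXmem π).2 hb), hS0, ha2]
      · rintro ⟨hb, hfeq⟩
        obtain ⟨ha1, ha3, ha4, ha5, ha6⟩ := hb
        refine ⟨ha1, ?_, ha3, ha4, ha5, ha6⟩
        rw [← hS0, ← hfeq]
        exact (hgc π ((hXmem π).2 ⟨ha1, ha3, ha4, ha5, ha6⟩)).symm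
    rw [eL, eR, Set.ncard_coe_finset, Set.ncard_coe_finset]
    exact final
  · have e1 : {π : List (Finset ℕ) | OSP.isOP n k π ∧ OSP.bDesSet π = S
        ∧ OSP.openers π = O ∧ OSP.closers π = C
        ∧ OSP.rsb n π = a ∧ OSP.lsb n π = b} = ∅ := by
      rw [Set.eq_empty_iff_forall_notMem]
      rintro π ⟨hp1, hp2, -⟩
      exact hS (hp2 ▸ hbd π hp1)
    have e2 : {π : List (Finset ℕ) | OSP.isOP n k π ∧ OSP.bAscSet π = S
        ∧ OSP.openers π = O ∧ OSP.closers π = C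
        ∧ OSP.rsb n π = a ∧ OSP.lsb n π = b} = ∅ := by
      rw [Set.eq_empty_iff_forall_notMem]
      rintro π ⟨hp1, hp2, -⟩
      exact hS (hp2 ▸ hba π hp1)
    rw [e1, e2]
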